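/- For a Hessenberg index-2 DAE (ẏ = f(y,z), 0 = g(y), so ḡ_z = 0) with true solution (y,z), approximation (Y,Z), and adjoint pair (φ^{(y)}, φ^{(z)}) solving -φ̇^{(y)} = f̄_yᵀ φ^{(y)} + ḡ_yᵀ φ^{(z)} + ψ^y, 0 = f̄_zᵀ φ^{(y)} + ψ^z, with terminal condition φ^{(y)}(T) = -ḡ_yᵀ (f̄_zᵀ ḡ_yᵀ)⁻¹ ψ^z |_{t=T}, the cumulative QoI error satisfies ∫₀ᵀ (e^{(y)}, ψ^y) dt + ∫₀ᵀ (e^{(z)}, ψ^z) dt = (φ^{(y)}(0), e^{(y)}(0)) + ∫₀ᵀ (φ^{(y)}, f(Y,Z) - Ẏ) dt + ∫₀ᵀ (φ^{(z)}, g(Y)) dt - (g(Y), (f̄_zᵀ ḡ_yᵀ)⁻¹ ψ^z)|_{t=T}. -/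

import Mathlib

open Matrix MeasureTheory

/-- The averaged Jacobian matrix `∫₀¹ DF(s) (c s) ds`. -/
noncomputable def avgJac {p q : ℕ} (F : ℝ → (Fin p → ℝ) → (Fin q → ℝ))
    (c : ℝ → Fin p → ℝ) : Matrix (Fin q) (Fin p) ℝ :=
  LinearMap.toMatrix'
    ((∫ s in (0:ℝ)..1, fderiv ℝ (F s) (c s)).toLinearMap)

lemma mulVec_toMatrix' {p q : ℕ} (L : (Fin p → ℝ) →ₗ[ℝ] (Fin q → ℝ)) (v : Fin p → ℝ) :
    (LinearMap.toMatrix' L) *ᵥ v = L v := by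
  rw [← Matrix.toLin'_apply, Matrix.toLin'_toMatrix']

lemma dot_transpose_mulVec {a b : ℕ} (A : Matrix (Fin a) (Fin b) ℝ)
    (u : Fin a → ℝ) (v : Fin b → ℝ) : (Aᵀ *ᵥ u) ⬝ᵥ v = u ⬝ᵥ (A *ᵥ v) := by
  rw [Matrix.mulVec_transpose, ← Matrix.dotProduct_mulVec]

lemma cont_dot {p : ℕ} {u v : ℝ → Fin p → ℝ} (hu : Continuous u) (hv : Continuous v) :
    Continuous (fun t => u t ⬝ᵥ v t) := by
  simp only [dotProduct]
  exact continuous_finset_sum _ fun i _ =>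
    ((continuous_apply i).comp hu).mul ((continuous_apply i).comp hv)

lemma hasDerivAt_dot {p : ℕ} {u v : ℝ → Fin p → ℝ} {u' v' : Fin p → ℝ} {t : ℝ}
    (hu : HasDerivAt u u' t) (hv : HasDerivAt v v' t) :
    HasDerivAt (fun t => u t ⬝ᵥ v t) (u' ⬝ᵥ v t + u t ⬝ᵥ v' ) t := by
  simp only [dotProduct]
  rw [← Finset.sum_add_distrib]
  exact HasDerivAt.fun_sum fun i _ =>
    ((hasDerivAt_pi.mp hu i).mul (hasDerivAt_pi.mp hv i))

-- segment curve
lemma hasDerivAt_seg {p : ℕ} (a A : Fin p → ℝ) (s : ℝ) :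
    HasDerivAt (fun s : ℝ => s • a + (1 - s) • A) (a - A) s := by
  have h : (fun s : ℝ => s • a + (1 - s) • A) = fun s : ℝ => A + s • (a - A) := by
    funext s; simp [smul_sub, sub_smul, one_smul]; abel
  rw [h]
  have := ((hasDerivAt_id s).smul_const (a - A)).const_add A
  simpa using this

lemma avgJac_segment2 {n m : ℕ} (f : (Fin n → ℝ) × (Fin m → ℝ) → (Fin n → ℝ))
    (hf : ContDiff ℝ 1 f) (a A : Fin n → ℝ) (b B : Fin m → ℝ) :
    (avgJac (fun s y' => f (y', s • b + (1 - s) • B)) (fun s => s • a + (1 - s) • A)) *ᵥ (a - A)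
    + (avgJac (fun s z' => f (s • a + (1 - s) • A, z')) (fun s => s • b + (1 - s) • B)) *ᵥ (b - B)
    = f (a, b) - f (A, B) := by
  set yc : ℝ → Fin n → ℝ := fun s => s • a + (1 - s) • A with hyc
  set zc : ℝ → Fin m → ℝ := fun s => s • b + (1 - s) • B with hzc
  have hycc : Continuous yc := by fun_prop
  have hzcc : Continuous zc := by fun_prop
  have hd : ∀ s, HasFDerivAt f (fderiv ℝ f (yc s, zc s)) (yc s, zc s) :=
    fun s => (hf.differentiable one_ne_zero _).hasFDerivAt
  -- partial derivatives
  have h1 : ∀ s : ℝ, fderiv ℝ (fun y' => f (y', zc s)) (yc s)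
      = (fderiv ℝ f (yc s, zc s)).comp (ContinuousLinearMap.inl ℝ _ _) := fun s =>
    ((hd s).comp (yc s) (hasFDerivAt_prodMk_left (yc s) (zc s))).fderiv
  have h2 : ∀ s : ℝ, fderiv ℝ (fun z' => f (yc s, z')) (zc s)
      = (fderiv ℝ f (yc s, zc s)).comp (ContinuousLinearMap.inr ℝ _ _) := fun s =>
    ((hd s).comp (zc s) (hasFDerivAt_prodMk_right (yc s) (zc s))).fderiv
  have hcont : Continuous fun s => fderiv ℝ f (yc s, zc s) :=
    (hf.continuous_fderiv one_ne_zero).comp (hycc.prodMk hzcc)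
  have hint1 : IntervalIntegrable (fun s => fderiv ℝ (fun y' => f (y', zc s)) (yc s))
      volume 0 1 := by
    simp only [h1]
    exact (hcont.clm_comp continuous_const).intervalIntegrable 0 1
  have hint2 : IntervalIntegrable (fun s => fderiv ℝ (fun z' => f (yc s, z')) (zc s))
      volume 0 1 := by
    simp only [h2]
    exact (hcont.clm_comp continuous_const).intervalIntegrable 0 1
  -- apply integral to vector
  have happ : ∀ (G : ℝ → ((Fin n → ℝ) →L[ℝ] (Fin n → ℝ)) ), True := fun _ => trivial
  have key1 : (avgJac (fun s y' => f (y', zc s)) yc) *ᵥ (a - A)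
      = ∫ s in (0:ℝ)..1, fderiv ℝ f (yc s, zc s) (a - A, 0) := by
    rw [avgJac, mulVec_toMatrix']
    rw [ContinuousLinearMap.coe_coe]
    rw [intervalIntegral.integral_of_le zero_le_one,
      intervalIntegral.integral_of_le zero_le_one]
    rw [ContinuousLinearMap.integral_apply]
    · refine setIntegral_congr_fun measurableSet_Ioc fun s _ => ?_
      rw [h1]; rfl
    · exact (intervalIntegrable_iff_integrableOn_Ioc_of_le zero_le_one).mp hint1
  have key2 : (avgJac (fun s z' => f (yc s, z')) zc) *ᵥ (b - B)
      = ∫ s in (0:ℝ)..1, fderiv ℝ f (yc s, zc s) (0, b - B) := by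
    rw [avgJac, mulVec_toMatrix']
    rw [ContinuousLinearMap.coe_coe]
    rw [intervalIntegral.integral_of_le zero_le_one,
      intervalIntegral.integral_of_le zero_le_one]
    rw [ContinuousLinearMap.integral_apply]
    · refine setIntegral_congr_fun measurableSet_Ioc fun s _ => ?_
      rw [h2]; rfl
    · exact (intervalIntegrable_iff_integrableOn_Ioc_of_le zero_le_one).mp hint2
  rw [key1, key2, ← intervalIntegral.integral_add
    ((hcont.clm_apply continuous_const).intervalIntegrable 0 1)
    ((hcont.clm_apply continuous_const).intervalIntegrable 0 1)]
  have hsum : ∀ s : ℝ, fderiv ℝ f (yc s, zc s) (a - A, 0) + fderiv ℝ f (yc s, zc s) (0, b - B)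
      = fderiv ℝ f (yc s, zc s) (a - A, b - B) := by
    intro s
    rw [← ContinuousLinearMap.map_add]
    congr 1
    simp [Prod.mk_add_mk]
  simp only [hsum]
  have hftc : ∫ s in (0:ℝ)..1, fderiv ℝ f (yc s, zc s) (a - A, b - B)
      = f (yc 1, zc 1) - f (yc 0, zc 0) := by
    apply intervalIntegral.integral_eq_sub_of_hasDerivAt (f := fun s => f (yc s, zc s))
    · intro s _
      exact (hd s).comp_hasDerivAt s ((hasDerivAt_seg a A s).prodMk (hasDerivAt_seg b B s))
    · exact (hcont.clm_apply continuous_const).intervalIntegrable 0 1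
  rw [hftc]
  simp [hyc, hzc]

lemma avgJac_segment1 {n m : ℕ} (g : (Fin n → ℝ) → (Fin m → ℝ))
    (hg : ContDiff ℝ 1 g) (a A : Fin n → ℝ) :
    (avgJac (fun _ y' => g y') (fun s => s • a + (1 - s) • A)) *ᵥ (a - A) = g a - g A := by
  set yc : ℝ → Fin n → ℝ := fun s => s • a + (1 - s) • A with hyc
  have hycc : Continuous yc := by fun_prop
  have hcont : Continuous fun s => fderiv ℝ g (yc s) :=
    (hg.continuous_fderiv one_ne_zero).comp hycc
  have key : (avgJac (fun _ y' => g y') yc) *ᵥ (a - A)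
      = ∫ s in (0:ℝ)..1, fderiv ℝ g (yc s) (a - A) := by
    rw [avgJac, mulVec_toMatrix']
    rw [ContinuousLinearMap.coe_coe]
    rw [intervalIntegral.integral_of_le zero_le_one,
      intervalIntegral.integral_of_le zero_le_one]
    rw [ContinuousLinearMap.integral_apply]
    exact (intervalIntegrable_iff_integrableOn_Ioc_of_le zero_le_one).mp
      (hcont.intervalIntegrable 0 1)
  rw [key]
  have hftc : ∫ s in (0:ℝ)..1, fderiv ℝ g (yc s) (a - A) = g (yc 1) - g (yc 0) := by
    apply intervalIntegral.integral_eq_sub_of_hasDerivAt (f := fun s => g (yc s))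
    · intro s _
      exact ((hg.differentiable one_ne_zero _).hasFDerivAt).comp_hasDerivAt s (hasDerivAt_seg a A s)
    · exact (hcont.clm_apply continuous_const).intervalIntegrable 0 1
  rw [hftc]
  simp [hyc]
/-- Cumulative QoI error representation for a Hessenberg index-2 DAE. -/
theorem hessenberg2_cumulative_qoi_error {n m : ℕ} (T : ℝ) (hT : 0 < T)
    (f : (Fin n → ℝ) × (Fin m → ℝ) → (Fin n → ℝ))
    (g : (Fin n → ℝ) → (Fin m → ℝ))
    (hf : ContDiff ℝ 1 f) (hg : ContDiff ℝ 1 g)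
    (y Y Y' ψy φy : ℝ → Fin n → ℝ) (z Z ψz φz : ℝ → Fin m → ℝ)
    (fby : ℝ → Matrix (Fin n) (Fin n) ℝ) (fbz : ℝ → Matrix (Fin n) (Fin m) ℝ)
    (gby : ℝ → Matrix (Fin m) (Fin n) ℝ)
    -- the averaged Jacobians along the segment between (y,z) and (Y,Z)
    (hfby : ∀ t, fby t = avgJac (fun s y' => f (y', s • z t + (1 - s) • Z t))
      (fun s => s • y t + (1 - s) • Y t))
    (hfbz : ∀ t, fbz t = avgJac (fun s z' => f (s • y t + (1 - s) • Y t, z'))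
      (fun s => s • z t + (1 - s) • Z t))
    (hgby : ∀ t, gby t = avgJac (fun _ y' => g y')
      (fun s => s • y t + (1 - s) • Y t))
    -- the true solution of the Hessenberg index-2 DAE
    (hy : ∀ t ∈ Set.Icc (0:ℝ) T, HasDerivAt y (f (y t, z t)) t)
    (hcon : ∀ t ∈ Set.Icc (0:ℝ) T, g (y t) = 0)
    -- the approximate solution and its derivative
    (hY : ∀ t ∈ Set.Icc (0:ℝ) T, HasDerivAt Y (Y' t) t)
    -- the adjoint DAE (note ḡ_z = 0)
    (hadj1 : ∀ t ∈ Set.Ico (0:ℝ) T,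
      HasDerivAt φy (-((fby t)ᵀ *ᵥ φy t + (gby t)ᵀ *ᵥ φz t + ψy t)) t)
    (hadj2 : ∀ t ∈ Set.Ico (0:ℝ) T, (fbz t)ᵀ *ᵥ φy t + ψz t = 0)
    -- sufficient smoothness for the integrals and integration by parts
    (hyc : Continuous y) (hYc : Continuous Y) (hY'c : Continuous Y')
    (hzc : Continuous z) (hZc : Continuous Z)
    (hψyc : Continuous ψy) (hψzc : Continuous ψz)
    (hφyc : Continuous φy) (hφzc : Continuous φz)
    -- invertibility of f̄_zᵀ ḡ_yᵀ at the terminal time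
    (hinv : IsUnit ((fbz T)ᵀ * (gby T)ᵀ))
    -- adjoint terminal condition
    (hφT : φy T = -((gby T)ᵀ *ᵥ (((fbz T)ᵀ * (gby T)ᵀ)⁻¹ *ᵥ ψz T))) :
    (∫ t in (0:ℝ)..T, (y t - Y t) ⬝ᵥ ψy t)
      + (∫ t in (0:ℝ)..T, (z t - Z t) ⬝ᵥ ψz t)
    = φy 0 ⬝ᵥ (y 0 - Y 0)
      + (∫ t in (0:ℝ)..T, φy t ⬝ᵥ (f (Y t, Z t) - Y' t))
      + (∫ t in (0:ℝ)..T, φz t ⬝ᵥ g (Y t))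
      - g (Y T) ⬝ᵥ (((fbz T)ᵀ * (gby T)ᵀ)⁻¹ *ᵥ ψz T) := by
  -- averaged Jacobian identities
  have hfid : ∀ t, fby t *ᵥ (y t - Y t) + fbz t *ᵥ (z t - Z t)
      = f (y t, z t) - f (Y t, Z t) := by
    intro t; rw [hfby, hfbz]; exact avgJac_segment2 f hf (y t) (Y t) (z t) (Z t)
  have hgid : ∀ t, gby t *ᵥ (y t - Y t) = g (y t) - g (Y t) := by
    intro t; rw [hgby]; exact avgJac_segment1 g hg (y t) (Y t)
  set u : ℝ → ℝ := fun t => φy t ⬝ᵥ (y t - Y t) with hu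
  set v : ℝ → ℝ := fun t => -((y t - Y t) ⬝ᵥ ψy t) - ((z t - Z t) ⬝ᵥ ψz t)
      + φy t ⬝ᵥ (f (Y t, Z t) - Y' t) + φz t ⬝ᵥ g (Y t) with hv
  -- derivative of u
  have hderiv : ∀ t ∈ Set.Ioo (0:ℝ) T, HasDerivAt u (v t) t := by
    intro t ht
    have htIcc : t ∈ Set.Icc (0:ℝ) T := Set.Ioo_subset_Icc_self ht
    have htIco : t ∈ Set.Ico (0:ℝ) T := ⟨ht.1.le, ht.2⟩
    have hD : HasDerivAt u
        ((-((fby t)ᵀ *ᵥ φy t + (gby t)ᵀ *ᵥ φz t + ψy t)) ⬝ᵥ (y t - Y t)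
          + φy t ⬝ᵥ (f (y t, z t) - Y' t)) t :=
      hasDerivAt_dot (hadj1 t htIco) ((hy t htIcc).sub (hY t htIcc))
    convert hD using 1
    have e1 : (-((fby t)ᵀ *ᵥ φy t + (gby t)ᵀ *ᵥ φz t + ψy t)) ⬝ᵥ (y t - Y t)
        = -(φy t ⬝ᵥ (fby t *ᵥ (y t - Y t))) - φz t ⬝ᵥ (gby t *ᵥ (y t - Y t))
          - ψy t ⬝ᵥ (y t - Y t) := by
      rw [neg_dotProduct, add_dotProduct, add_dotProduct,
        dot_transpose_mulVec, dot_transpose_mulVec]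
      ring
    have e2 : φy t ⬝ᵥ (f (y t, z t) - Y' t)
        = φy t ⬝ᵥ (f (Y t, Z t) - Y' t) + φy t ⬝ᵥ (fby t *ᵥ (y t - Y t))
          + φy t ⬝ᵥ (fbz t *ᵥ (z t - Z t)) := by
      rw [← dotProduct_add, ← dotProduct_add]
      congr 1
      have h := hfid t
      have h2 : f (y t, z t) = f (Y t, Z t)
          + (fby t *ᵥ (y t - Y t) + fbz t *ᵥ (z t - Z t)) := by rw [h]; abel
      rw [h2]; abel
    have e3 : φy t ⬝ᵥ (fbz t *ᵥ (z t - Z t)) = -(ψz t ⬝ᵥ (z t - Z t)) := by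
      rw [← dot_transpose_mulVec]
      have : (fbz t)ᵀ *ᵥ φy t = -(ψz t) := by
        have := hadj2 t htIco; linear_combination (norm := module) this
      rw [this, neg_dotProduct]
    have e4 : φz t ⬝ᵥ (gby t *ᵥ (y t - Y t)) = -(φz t ⬝ᵥ g (Y t)) := by
      rw [hgid t, hcon t htIcc, zero_sub, dotProduct_neg]
    rw [e1, e2, e3, e4, hv]
    simp only [dotProduct_comm (ψy t), dotProduct_comm (ψz t)]
    ring
  -- continuity facts
  have hfc : Continuous f := hf.continuous
  have hgc : Continuous g := hg.continuous
  have hucont : Continuous u := cont_dot hφyc (hyc.sub hYc)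
  have hint1 : IntervalIntegrable (fun t => (y t - Y t) ⬝ᵥ ψy t) volume 0 T :=
    (cont_dot (hyc.sub hYc) hψyc).intervalIntegrable 0 T
  have hint2 : IntervalIntegrable (fun t => (z t - Z t) ⬝ᵥ ψz t) volume 0 T :=
    (cont_dot (hzc.sub hZc) hψzc).intervalIntegrable 0 T
  have hint3 : IntervalIntegrable (fun t => φy t ⬝ᵥ (f (Y t, Z t) - Y' t)) volume 0 T :=
    (cont_dot hφyc ((hfc.comp (hYc.prodMk hZc)).sub hY'c)).intervalIntegrable 0 T
  have hint4 : IntervalIntegrable (fun t => φz t ⬝ᵥ g (Y t)) volume 0 T :=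
    (cont_dot hφzc (hgc.comp hYc)).intervalIntegrable 0 T
  have hvcont : Continuous v := by
    apply Continuous.add
    apply Continuous.add
    apply Continuous.sub
    · exact (cont_dot (hyc.sub hYc) hψyc).neg
    · exact cont_dot (hzc.sub hZc) hψzc
    · exact cont_dot hφyc ((hfc.comp (hYc.prodMk hZc)).sub hY'c)
    · exact cont_dot hφzc (hgc.comp hYc)
  -- FTC
  have hftc : ∫ t in (0:ℝ)..T, v t = u T - u 0 :=
    intervalIntegral.integral_eq_sub_of_hasDeriv_right_of_le hT.le
      hucont.continuousOn
      (fun t ht => (hderiv t ht).hasDerivWithinAt)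
      (hvcont.intervalIntegrable 0 T)
  -- split the integral of v
  have hsplit : ∫ t in (0:ℝ)..T, v t
      = -(∫ t in (0:ℝ)..T, (y t - Y t) ⬝ᵥ ψy t)
        - (∫ t in (0:ℝ)..T, (z t - Z t) ⬝ᵥ ψz t)
        + (∫ t in (0:ℝ)..T, φy t ⬝ᵥ (f (Y t, Z t) - Y' t))
        + (∫ t in (0:ℝ)..T, φz t ⬝ᵥ g (Y t)) := by
    have hn : IntervalIntegrable (fun t => -((y t - Y t) ⬝ᵥ ψy t)) volume 0 T := hint1.neg
    rw [hv, intervalIntegral.integral_add ((hn.sub hint2).add hint3) hint4,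
      intervalIntegral.integral_add (hn.sub hint2) hint3,
      intervalIntegral.integral_sub hn hint2,
      intervalIntegral.integral_neg]
  -- terminal value
  have hterm : u T = g (Y T) ⬝ᵥ (((fbz T)ᵀ * (gby T)ᵀ)⁻¹ *ᵥ ψz T) := by
    rw [hu]
    simp only [hφT, neg_dotProduct, dot_transpose_mulVec, hgid T,
      hcon T (Set.right_mem_Icc.mpr hT.le), zero_sub, dotProduct_neg, neg_neg]
    rw [dotProduct_comm]
  rw [hsplit, hterm] at hftc
  rw [hu] at hftc
  linarith [hftc]
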